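/- Let r, s ≥ 1 be integers and t = min(r, s). Let M be an r×s matrix with entries in {−1, 0, 1} and u ∈ {−1, 0, 1}^r. Let p be a prime and F a field of characteristic p, and view the entries of M and u as elements of F via the canonical ring map from ℤ. If the linear system M·x = u has a solution x ∈ F^s, then there exist integers a_1, …, a_s and b with |a_i| ≤ t! for every i ∈ [s], |b| ≤ t!, and p does not divide b, such that the vector x ∈ 𝔽_p^s given by x_i = (a_i mod p)·(b mod p)^{−1} satisfies M·x = u over the prime field 𝔽_p. -/

import Mathlib

open Matrix Submodule

/-- Determinant bound for matrices with entries of absolute value at most 1. -/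
lemma det_abs_le_factorial {n : Type*} [Fintype n] [DecidableEq n]
    (A : Matrix n n ℤ) (hA : ∀ i j, |A i j| ≤ 1) :
    |A.det| ≤ ((Fintype.card n).factorial : ℤ) := by
  rw [Matrix.det_apply]
  calc |∑ σ : Equiv.Perm n, Equiv.Perm.sign σ • ∏ i, A (σ i) i|
      ≤ ∑ σ : Equiv.Perm n, |Equiv.Perm.sign σ • ∏ i, A (σ i) i| :=
        Finset.abs_sum_le_sum_abs _ _
    _ ≤ ∑ _σ : Equiv.Perm n, 1 := by
        apply Finset.sum_le_sum
        intro σ _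
        have habs : |∏ i, A (σ i) i| ≤ 1 := by
          rw [Finset.abs_prod]
          calc ∏ i, |A (σ i) i| ≤ ∏ _i : n, 1 :=
                Finset.prod_le_prod (fun i _ => abs_nonneg _) (fun i _ => hA _ _)
            _ = 1 := Finset.prod_const_one
        rcases Int.units_eq_one_or (Equiv.Perm.sign σ) with h | h <;>
          rw [h] <;> simpa using habs
    _ = ((Fintype.card n).factorial : ℤ) := by
        simp [Fintype.card_perm]

section Main

variable {p : ℕ} [Fact p.Prime]

/-- Descent: a {-1,0,1} system solvable over `F` of char `p` is solvable over `ZMod p`. -/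
lemma solvable_descent (r s : ℕ) (M : Matrix (Fin r) (Fin s) ℤ) (u : Fin r → ℤ)
    (F : Type*) [Field F] [CharP F p]
    (hsol : ∃ x : Fin s → F, ∀ i, ∑ j, (M i j : F) * x j = (u i : F)) :
    (fun i => (u i : ZMod p)) ∈
      Submodule.span (ZMod p) (Set.range (fun j (i : Fin r) => (M i j : ZMod p))) := by
  classical
  set K := ZMod p
  set cols : Fin s → (Fin r → K) := fun j i => (M i j : K) with hcols
  set u' : Fin r → K := fun i => (u i : K) with hu'
  by_contra hmem
  set W : Submodule K (Fin r → K) := Submodule.span K (Set.range cols) with hW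
  -- build a functional vanishing on W but not on u'
  have hq : W.mkQ u' ≠ 0 := by
    rw [Submodule.mkQ_apply, ne_eq, Submodule.Quotient.mk_eq_zero]
    exact hmem
  have := (Module.forall_dual_apply_eq_zero_iff K (W.mkQ u')).not.mpr hq
  push_neg at this
  obtain ⟨ψ, hψ⟩ := this
  set φ : (Fin r → K) →ₗ[K] K := ψ.comp W.mkQ with hφ
  have hφW : ∀ w ∈ W, φ w = 0 := by
    intro w hw
    simp only [hφ, LinearMap.comp_apply, Submodule.mkQ_apply]
    rw [(Submodule.Quotient.mk_eq_zero W).mpr hw, map_zero]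
  have hφu : φ u' ≠ 0 := hψ
  set y : Fin r → K := fun i => φ (Pi.single i 1) with hy
  have hφeval : ∀ v : Fin r → K, φ v = ∑ i, v i * y i := by
    intro v
    conv_lhs => rw [← Finset.univ_sum_single v]
    rw [map_sum]
    congr 1
    ext i
    have : (Pi.single i (v i) : Fin r → K) = v i • (Pi.single i (1 : K) : Fin r → K) := by
      rw [← Pi.single_smul, smul_eq_mul, mul_one]
    rw [this, _root_.map_smul, smul_eq_mul]
  -- y annihilates all columns
  have hycol : ∀ j, ∑ i, (M i j : K) * y i = 0 := by
    intro j
    have := hφW (cols j) (Submodule.subset_span ⟨j, rfl⟩)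
    rw [hφeval] at this
    simpa [hcols] using this
  -- transfer to F
  obtain ⟨x, hx⟩ := hsol
  set f : K →+* F := ZMod.castHom (dvd_refl p) F with hf
  have hfy : ∀ j, ∑ i, (M i j : F) * f (y i) = 0 := by
    intro j
    have := congrArg f (hycol j)
    rw [map_sum, map_zero] at this
    simpa [_root_.map_mul, map_intCast] using this
  have hfu : f (φ u') = 0 := by
    rw [hφeval]
    rw [map_sum]
    have : ∀ i, f (u' i * y i) = (u i : F) * f (y i) := by
      intro i
      rw [_root_.map_mul]
      congr 1
      simp [hu', map_intCast]
    rw [Finset.sum_congr rfl (fun i _ => this i)]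
    calc ∑ i, (u i : F) * f (y i)
        = ∑ i, (∑ j, (M i j : F) * x j) * f (y i) := by
          refine Finset.sum_congr rfl fun i _ => by rw [hx i]
      _ = ∑ i, ∑ j, (M i j : F) * x j * f (y i) := by
          refine Finset.sum_congr rfl fun i _ => Finset.sum_mul _ _ _
      _ = ∑ j, ∑ i, (M i j : F) * x j * f (y i) := Finset.sum_comm
      _ = ∑ j, (∑ i, (M i j : F) * f (y i)) * x j := by
          refine Finset.sum_congr rfl fun j _ => ?_
          rw [Finset.sum_mul]
          refine Finset.sum_congr rfl fun i _ => by ring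
      _ = 0 := by
          refine Finset.sum_eq_zero fun j _ => by rw [hfy j, zero_mul]
  exact hφu (by
    have hinj : Function.Injective f := f.injective
    exact hinj (by rw [hfu, map_zero]))

end Main

theorem stmt1 (r s : ℕ) (hr : 1 ≤ r) (hs : 1 ≤ s)
    (M : Matrix (Fin r) (Fin s) ℤ) (u : Fin r → ℤ)
    (hM : ∀ i j, M i j ∈ ({-1, 0, 1} : Set ℤ))
    (hu : ∀ i, u i ∈ ({-1, 0, 1} : Set ℤ))
    (p : ℕ) [hp : Fact p.Prime]
    (F : Type*) [Field F] [CharP F p]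
    (hsol : ∃ x : Fin s → F, ∀ i, ∑ j, (M i j : F) * x j = (u i : F)) :
    ∃ (a : Fin s → ℤ) (b : ℤ), (∀ j, |a j| ≤ ((min r s).factorial : ℤ)) ∧
      |b| ≤ ((min r s).factorial : ℤ) ∧ ¬ (p : ℤ) ∣ b ∧
      ∀ i, ∑ j, (M i j : ZMod p) * ((a j : ZMod p) * ((b : ZMod p))⁻¹) = (u i : ZMod p) := by
  classical
  set K := ZMod p with hK
  have habs1 : ∀ z : ℤ, z ∈ ({-1, 0, 1} : Set ℤ) → |z| ≤ 1 := by
    rintro z (rfl | rfl | rfl) <;> norm_num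
  set cols : Fin s → (Fin r → K) := fun j i => (M i j : K) with hcolsdef
  have hu' : (fun i => (u i : K)) ∈ Submodule.span K (Set.range cols) :=
    solvable_descent r s M u F hsol
  obtain ⟨I, hIli, hImax⟩ := exists_maximal_linearIndepOn K cols
  haveI : Fintype I := I.toFinite.fintype
  have hspan_eq : Submodule.span K (cols '' I) = Submodule.span K (Set.range cols) := by
    refine le_antisymm (Submodule.span_mono (Set.image_subset_range _ _)) ?_
    rw [Submodule.span_le]
    rintro _ ⟨j, rfl⟩
    by_cases hj : j ∈ I
    · exact Submodule.subset_span (Set.mem_image_of_mem _ hj)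
    · obtain ⟨aK, ha0, hamem⟩ := hImax j hj
      exact (Submodule.smul_mem_iff _ ha0).mp hamem
  have hu'I : (fun i => (u i : K)) ∈ Submodule.span K (Set.range fun j : I => cols j) := by
    rw [← Set.image_eq_range, hspan_eq]
    exact hu'
  obtain ⟨c, hc⟩ := (mem_span_range_iff_exists_fun K).mp hu'I
  -- rows
  set rows : Fin r → (I → K) := fun i j => cols j i with hrowsdef
  obtain ⟨R, hRli, hRmax⟩ := exists_maximal_linearIndepOn K rows
  haveI : Fintype R := R.toFinite.fintype
  have hrows_span : ∀ i, rows i ∈ Submodule.span K (rows '' R) := by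
    intro i
    by_cases hi : i ∈ R
    · exact Submodule.subset_span (Set.mem_image_of_mem _ hi)
    · obtain ⟨aK, ha0, hamem⟩ := hRmax i hi
      exact (Submodule.smul_mem_iff _ ha0).mp hamem
  set Q : Matrix R I K := fun i j => rows (i : Fin r) j with hQdef
  have hQinj : ∀ v : I → K, Q.mulVec v = 0 → v = 0 := by
    intro v hv
    set φv : (I → K) →ₗ[K] K :=
      { toFun := fun w => ∑ j, w j * v j
        map_add' := by
          intro w1 w2
          simp [add_mul, Finset.sum_add_distrib]
        map_smul' := by
          intro t w
          simp [Finset.mul_sum, mul_assoc]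
          convert (Finset.mul_sum _ _ t).symm } with hφvdef
    have hgen : Submodule.span K (rows '' R) ≤ LinearMap.ker φv := by
      rw [Submodule.span_le]
      rintro _ ⟨i, hi, rfl⟩
      have : Q.mulVec v ⟨i, hi⟩ = 0 := by rw [hv]; rfl
      simpa [LinearMap.mem_ker, hφvdef, Matrix.mulVec, dotProduct, hQdef] using this
    have hall : ∀ i : Fin r, ∑ j : I, rows i j * v j = 0 := by
      intro i
      have := hgen (hrows_span i)
      simpa [LinearMap.mem_ker, hφvdef] using this
    have hzero : ∑ j : I, v j • cols (j : Fin s) = 0 := by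
      funext i
      have := hall i
      simpa [Finset.sum_apply, hrowsdef, mul_comm] using this
    funext j
    exact Fintype.linearIndependent_iff.mp hIli v hzero j
  -- cardinalities
  have hcard : Fintype.card I = Fintype.card R := by
    refine le_antisymm ?_ ?_
    · have hinj : Function.Injective Q.mulVecLin := by
        rw [← LinearMap.ker_eq_bot, eq_bot_iff]
        intro v hv
        exact hQinj v (by simpa [LinearMap.mem_ker] using hv)
      have := LinearMap.finrank_le_finrank_of_injective hinj
      simpa [Module.finrank_pi] using this
    · have := hRli.fintype_card_le_finrank
      simpa [Module.finrank_pi] using this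
  set e : I ≃ R := Fintype.equivOfCardEq hcard with hedef
  set B : Matrix I I ℤ := fun i j => M ((e i : Fin r)) ((j : Fin s)) with hBdef
  set Bp : Matrix I I K := B.map (Int.cast : ℤ → K) with hBpdef
  have hBpQ : ∀ i j, Bp i j = Q (e i) j := by intro i j; rfl
  have hdet : Bp.det ≠ 0 := by
    intro h
    obtain ⟨v, hvne, hv⟩ := (Matrix.exists_mulVec_eq_zero_iff).mpr h
    refine hvne (hQinj v ?_)
    funext iR
    have := congrFun hv (e.symm iR)
    simpa [Matrix.mulVec, dotProduct, hBpQ, Equiv.apply_symm_apply] using this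
  set b : ℤ := B.det with hbdef
  have hbK : ((b : ℤ) : K) = Bp.det := by
    rw [hbdef, hBpdef]
    exact RingHom.map_det (Int.castRingHom K) B
  have hndvd : ¬ (p : ℤ) ∣ b := by
    rw [← ZMod.intCast_zmod_eq_zero_iff_dvd]
    intro h
    exact hdet (by rw [← hbK, h])
  set w : I → K := fun i => (u ((e i : Fin r)) : K) with hwdef
  set a : Fin s → ℤ := fun j =>
    if h : j ∈ I then Matrix.cramer B (fun i => u ((e i : Fin r))) ⟨j, h⟩ else 0 with hadef
  -- bounds
  have hks : Fintype.card I ≤ min r s := by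
    refine le_min ?_ ?_
    · rw [hcard]
      have := Fintype.card_le_of_injective (Subtype.val : R → Fin r) Subtype.val_injective
      simpa using this
    · have := Fintype.card_le_of_injective (Subtype.val : I → Fin s) Subtype.val_injective
      simpa using this
  have hfact : ((Fintype.card I).factorial : ℤ) ≤ ((min r s).factorial : ℤ) := by
    exact_mod_cast Nat.factorial_le hks
  have hb_bound : |b| ≤ ((min r s).factorial : ℤ) := by
    refine le_trans (det_abs_le_factorial B ?_) hfact
    intro i j
    exact habs1 _ (hM _ _)
  have ha_bound : ∀ j, |a j| ≤ ((min r s).factorial : ℤ) := by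
    intro j
    by_cases h : j ∈ I
    · simp only [hadef, dif_pos h]
      rw [Matrix.cramer_apply]
      refine le_trans (det_abs_le_factorial _ ?_) hfact
      intro i jj
      rw [Matrix.updateCol_apply]
      split
      · exact habs1 _ (hu _)
      · exact habs1 _ (hM _ _)
    · simp only [hadef, dif_neg h, abs_zero]
      positivity
  -- the square system and uniqueness
  have hcw : Bp.mulVec (fun j => c j) = w := by
    funext i
    have := congrFun hc ((e i : Fin r))
    simp only [Finset.sum_apply, Pi.smul_apply, smul_eq_mul] at this
    simp only [Matrix.mulVec, dotProduct, hwdef]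
    rw [← this]
    refine Finset.sum_congr rfl fun j _ => ?_
    rw [hBpQ]
    simp [hQdef, hrowsdef, mul_comm]
  set yv : I → K := (Bp.det)⁻¹ • Matrix.cramer Bp w with hyvdef
  have hyw : Bp.mulVec yv = w := by
    rw [hyvdef, Matrix.mulVec_smul, Matrix.mulVec_cramer, smul_smul,
      inv_mul_cancel₀ hdet, one_smul]
  have hceq : (fun j => c j) = yv := by
    have hdiff : Bp.mulVec ((fun j => c j) - yv) = 0 := by
      rw [Matrix.mulVec_sub, hcw, hyw, sub_self]
    by_contra hne
    have : (fun j => c j) - yv ≠ 0 := fun h => hne (by rwa [sub_eq_zero] at h)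
    exact hdet ((Matrix.exists_mulVec_eq_zero_iff).mp ⟨_, this, hdiff⟩)
  have hcramer_map : ∀ jj : I,
      ((Matrix.cramer B (fun i => u ((e i : Fin r))) jj : ℤ) : K) = Matrix.cramer Bp w jj := by
    intro jj
    rw [Matrix.cramer_apply, Matrix.cramer_apply]
    have hcol : Bp.updateCol jj w
        = (B.updateCol jj (fun i => u ((e i : Fin r)))).map (Int.cast : ℤ → K) := by
      rw [hBpdef, Matrix.map_updateCol]
      congr 1
    rw [hcol]
    exact RingHom.map_det (Int.castRingHom K) _
  have hcval : ∀ jj : I, c jj = (a (jj : Fin s) : K) * ((b : K))⁻¹ := by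
    intro jj
    have h1 : c jj = yv jj := congrFun hceq jj
    rw [h1, hyvdef]
    simp only [Pi.smul_apply, smul_eq_mul]
    rw [← hcramer_map jj, ← hbK]
    have : a (jj : Fin s) = Matrix.cramer B (fun i => u ((e i : Fin r))) jj := by
      simp only [hadef, dif_pos jj.2]
    rw [this]
    ring
  -- conclusion
  refine ⟨a, b, ha_bound, hb_bound, hndvd, ?_⟩
  intro i
  have hzero_out : ∀ j ∈ (Finset.univ : Finset (Fin s)), j ∉ I.toFinset →
      (M i j : K) * ((a j : K) * ((b : K))⁻¹) = 0 := by
    intro j _ hj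
    rw [Set.mem_toFinset] at hj
    rw [hadef]
    simp [dif_neg hj]
  calc ∑ j, (M i j : K) * ((a j : K) * ((b : K))⁻¹)
      = ∑ j ∈ I.toFinset, (M i j : K) * ((a j : K) * ((b : K))⁻¹) :=
        (Finset.sum_subset (Finset.subset_univ _) hzero_out).symm
    _ = ∑ j : I, (M i (j : Fin s) : K) * ((a (j : Fin s) : K) * ((b : K))⁻¹) :=
        (Finset.sum_set_coe _).symm
    _ = ∑ j : I, c j * (M i (j : Fin s) : K) := by
        refine Finset.sum_congr rfl fun jj _ => ?_
        rw [← hcval jj]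
        ring
    _ = (u i : K) := by
        have := congrFun hc i
        simp only [Finset.sum_apply, Pi.smul_apply, smul_eq_mul] at this
        rw [← this]
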